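/- Suppose Θ is bounded, the learning steplength is constant with 0 < γ_g < 2/G_g, and the extragradient steplength satisfies τ² < 1/(L_{F,x}² + 2 L_{F,θ} ‖θ₀ − θ*‖). Then the sequence (x_k, θ_k) generated by the joint extragradient scheme satisfies: x_k converges to a solution of VI(X, F(·,θ*)) and θ_k → θ* as k → ∞. -/

import Mathlib

set_option maxHeartbeats 2000000

open Filter Topology RealInnerProductSpace

lemma isClosed_ball_aux {X : Type*} [MetricSpace X] {x : X} {r : ℝ} :
    IsClosed (Metric.closedBall x r) := Metric.isClosed_closedBall

section myhelpers
variable {E : Type*} [NormedAddCommGroup E] [InnerProductSpace ℝ E]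


/-- variational characterization of nearest-point projection onto a convex set -/
lemma my_proj_inner_le {S : Set E} (hScv : Convex ℝ S) {P : E → E}
    (hP : ∀ y, P y ∈ S ∧ ∀ w ∈ S, ‖y - P y‖ ≤ ‖y - w‖) (y : E) {w : E} (hw : w ∈ S) :
    ⟪y - P y, w - P y⟫ ≤ 0 := by
  have key : ∀ t : ℝ, 0 < t → t ≤ 1 → ⟪y - P y, w - P y⟫ ≤ t / 2 * ‖w - P y‖ ^ 2 := by
    intro t ht0 ht1
    have hmem : P y + t • (w - P y) ∈ S := by
      have h2 := hScv (hP y).1 hw (by linarith : (0:ℝ) ≤ 1 - t) ht0.le (by ring)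
      have : (1 - t) • P y + t • w = P y + t • (w - P y) := by
        rw [smul_sub, sub_smul, one_smul]; abel
      rwa [this] at h2
    have hle := (hP y).2 _ hmem
    have hsq : ‖y - P y‖ ^ 2 ≤ ‖y - (P y + t • (w - P y))‖ ^ 2 :=
      pow_le_pow_left₀ (norm_nonneg _) hle 2
    have hexp : ‖y - (P y + t • (w - P y))‖ ^ 2
        = ‖y - P y‖ ^ 2 - 2 * (t * ⟪y - P y, w - P y⟫) + t ^ 2 * ‖w - P y‖ ^ 2 := by
      have h1 : y - (P y + t • (w - P y)) = (y - P y) - t • (w - P y) := by abel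
      rw [h1, @norm_sub_sq_real, real_inner_smul_right, norm_smul, mul_pow]
      simp only [Real.norm_eq_abs, sq_abs]
      try ring
    nlinarith
  have hten : Filter.Tendsto (fun k : ℕ => ((1:ℝ) / (k + 1)) / 2 * ‖w - P y‖ ^ 2)
      atTop (𝓝 0) := by
    have := tendsto_one_div_add_atTop_nhds_zero_nat (𝕜 := ℝ)
    simpa using ((this.div_const 2).mul_const (‖w - P y‖ ^ 2))
  refine ge_of_tendsto' hten fun k => key _ (by positivity) ?_
  rw [div_le_one (by positivity)]; linarith [Nat.cast_nonneg (α := ℝ) k]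

/-- projection decreases squared distance to points of the set -/
lemma my_proj_sq_le {S : Set E} (hScv : Convex ℝ S) {P : E → E}
    (hP : ∀ y, P y ∈ S ∧ ∀ w ∈ S, ‖y - P y‖ ≤ ‖y - w‖) (y : E) {w : E} (hw : w ∈ S) :
    ‖P y - w‖ ^ 2 ≤ ‖y - w‖ ^ 2 - ‖y - P y‖ ^ 2 := by
  have h1 : y - w = (y - P y) + (P y - w) := by abel
  have h2 : ‖y - w‖ ^ 2 = ‖y - P y‖ ^ 2 + 2 * ⟪y - P y, P y - w⟫ + ‖P y - w‖ ^ 2 := by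
    rw [h1, @norm_add_sq_real]; try ring
  have h3 : ⟪y - P y, w - P y⟫ ≤ 0 := my_proj_inner_le hScv hP y hw
  have h4 : ⟪y - P y, P y - w⟫ = - ⟪y - P y, w - P y⟫ := by
    rw [show P y - w = -(w - P y) by abel, inner_neg_right]
  nlinarith



variable [CompleteSpace E]

lemma my_line_deriv {g : E → ℝ} {gradg : E → E} (hgdiff : ∀ ϑ, HasGradientAt g (gradg ϑ) ϑ)
    (a d : E) (t : ℝ) :
    HasDerivAt (fun s : ℝ => g (a + s • d)) ⟪gradg (a + t • d), d⟫ t := by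
  have hc : HasDerivAt (fun s : ℝ => a + s • d) d t := by
    simpa using ((hasDerivAt_id t).smul_const d).const_add a
  have hf := (hasGradientAt_iff_hasFDerivAt.mp (hgdiff (a + t • d)))
  have := hf.comp_hasDerivAt t hc
  simpa [InnerProductSpace.toDual_apply_apply, Function.comp_def] using this

/-- descent lemma -/
lemma my_descent {g : E → ℝ} {gradg : E → E} (hgdiff : ∀ ϑ, HasGradientAt g (gradg ϑ) ϑ)
    {Gg : ℝ} (hGg : 0 < Gg) (hLipg : ∀ a b, ‖gradg a - gradg b‖ ≤ Gg * ‖a - b‖) (a b : E) :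
    g b ≤ g a + ⟪gradg a, b - a⟫ + Gg / 2 * ‖b - a‖ ^ 2 := by
  set d := b - a with hd
  set C := ⟪gradg a, d⟫ with hC
  set ψ : ℝ → ℝ := fun t => g (a + t • d) - t * C - Gg / 2 * ‖d‖ ^ 2 * t ^ 2 with hψdef
  have hψ' : ∀ t : ℝ, HasDerivAt ψ (⟪gradg (a + t • d), d⟫ - C - Gg * ‖d‖ ^ 2 * t) t := by
    intro t
    have h1 := my_line_deriv hgdiff a d t
    have h2 : HasDerivAt (fun t : ℝ => t * C) C t := by
      simpa using (hasDerivAt_id t).mul_const C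
    have h3 : HasDerivAt (fun t : ℝ => Gg / 2 * ‖d‖ ^ 2 * t ^ 2) (Gg / 2 * ‖d‖ ^ 2 * (2 * t)) t := by
      exact (hasDerivAt_pow 2 t).const_mul _ |>.congr_deriv (by ring)
    have := (h1.sub h2).sub h3
    convert this using 1
    case e'_9 => ring
    all_goals rfl
  have hψcont : Continuous ψ := by
    apply continuous_iff_continuousAt.mpr
    intro t
    exact (hψ' t).differentiableAt.continuousAt
  have hanti : AntitoneOn ψ (Set.Icc (0:ℝ) 1) := by
    apply antitoneOn_of_deriv_nonpos (convex_Icc 0 1) (hψcont.continuousOn)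
    · intro t ht
      exact (hψ' t).differentiableAt.differentiableWithinAt
    · intro t ht
      rw [interior_Icc] at ht
      rw [(hψ' t).deriv]
      have hcs : ⟪gradg (a + t • d) - gradg a, d⟫ ≤ ‖gradg (a + t • d) - gradg a‖ * ‖d‖ :=
        real_inner_le_norm _ _
      have hlip := hLipg (a + t • d) a
      have h5 : ‖a + t • d - a‖ = t * ‖d‖ := by
        simp [norm_smul, abs_of_pos ht.1]
      rw [h5] at hlip
      have h6 : ⟪gradg (a + t • d), d⟫ - C = ⟪gradg (a + t • d) - gradg a, d⟫ := by
        rw [inner_sub_left]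
      have hnd : (0:ℝ) ≤ ‖d‖ := norm_nonneg _
      nlinarith [mul_le_mul_of_nonneg_right hlip hnd]
  have h10 := hanti (Set.mem_Icc.mpr ⟨le_refl 0, zero_le_one⟩)
      (Set.mem_Icc.mpr ⟨zero_le_one, le_refl 1⟩) zero_le_one
  have hψ0 : ψ 0 = g a := by simp [hψdef]
  have hψ1 : ψ 1 = g b - C - Gg / 2 * ‖d‖ ^ 2 := by
    simp [hψdef, hd]
  rw [hψ0, hψ1] at h10
  linarith

/-- gradient inequality for convex functions on a convex set -/
lemma my_convex_grad {S : Set E} {g : E → ℝ} {gradg : E → E}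
    (hgdiff : ∀ ϑ, HasGradientAt g (gradg ϑ) ϑ) (hcvx : ConvexOn ℝ S g)
    {a b : E} (ha : a ∈ S) (hb : b ∈ S) :
    g a + ⟪gradg a, b - a⟫ ≤ g b := by
  set d := b - a with hd
  have hder : HasDerivAt (fun s : ℝ => g (a + s • d)) ⟪gradg a, d⟫ 0 := by
    have := my_line_deriv hgdiff a d 0
    simpa using this
  have hslope := hasDerivAt_iff_tendsto_slope.mp hder
  have hseq : Tendsto (fun k : ℕ => (1:ℝ) / (k + 1)) atTop (𝓝[≠] (0:ℝ)) := by
    apply tendsto_nhdsWithin_of_tendsto_nhds_of_eventually_within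
    · exact tendsto_one_div_add_atTop_nhds_zero_nat
    · filter_upwards with k
      simp only [Set.mem_compl_iff, Set.mem_singleton_iff]
      positivity
  have hcomp := hslope.comp hseq
  have hub : ∀ k : ℕ, slope (fun s : ℝ => g (a + s • d)) 0 ((1:ℝ) / (k + 1)) ≤ g b - g a := by
    intro k
    set t : ℝ := (1:ℝ) / (k + 1) with hts
    have ht0 : 0 < t := by positivity
    have ht1 : t ≤ 1 := by
      rw [hts, div_le_one (by positivity)]; linarith [Nat.cast_nonneg (α := ℝ) k]
    have hcx := hcvx.2 ha hb (by linarith : (0:ℝ) ≤ 1 - t) ht0.le (by ring)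
    have hpt : (1 - t) • a + t • b = a + t • d := by
      rw [hd, smul_sub, sub_smul, one_smul]; abel
    rw [hpt] at hcx
    simp only [smul_eq_mul] at hcx
    rw [slope_def_field]
    simp only [zero_smul, add_zero, sub_zero]
    rw [div_le_iff₀ ht0]
    linarith
  have := le_of_tendsto' hcomp (fun k => hub k)
  linarith

/-- quadratic growth at the constrained minimizer of a strongly convex function -/
lemma my_strong_growth {S : Set E} {g : E → ℝ} {η : ℝ} (hstrg : StrongConvexOn S η g)
    {θs : E} (hθs : θs ∈ S) (hmin : ∀ ϑ ∈ S, g θs ≤ g ϑ) {b : E} (hb : b ∈ S) :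
    η / 2 * ‖b - θs‖ ^ 2 ≤ g b - g θs := by
  have key : ∀ t : ℝ, 0 < t → t ≤ 1 →
      (1 - t) * (η / 2 * ‖b - θs‖ ^ 2) ≤ g b - g θs := by
    intro t ht0 ht1
    have hcx := hstrg.2 hb hθs ht0.le (by linarith : (0:ℝ) ≤ 1 - t) (by ring)
    have hmem : t • b + (1 - t) • θs ∈ S :=
      hstrg.1 hb hθs ht0.le (by linarith) (by ring)
    have hlb := hmin _ hmem
    simp only [smul_eq_mul] at hcx
    have h2 : g θs ≤ t * g b + (1 - t) * g θs - t * (1 - t) * (η / 2 * ‖b - θs‖ ^ 2) := by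
      calc g θs ≤ g (t • b + (1 - t) • θs) := hlb
        _ ≤ t * g b + (1 - t) * g θs - t * (1 - t) * (η / 2 * ‖b - θs‖ ^ 2) := by
            linarith [hcx]
    nlinarith
  have hten : Tendsto (fun k : ℕ => (1 - (1:ℝ) / (k + 1)) * (η / 2 * ‖b - θs‖ ^ 2))
      atTop (𝓝 (η / 2 * ‖b - θs‖ ^ 2)) := by
    have h1 : Tendsto (fun k : ℕ => 1 - (1:ℝ) / (k + 1)) atTop (𝓝 1) := by
      simpa using (tendsto_const_nhds (x := (1:ℝ))).sub tendsto_one_div_add_atTop_nhds_zero_nat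
    simpa using h1.mul_const (η / 2 * ‖b - θs‖ ^ 2)
  exact le_of_tendsto' hten fun k => key ((1:ℝ)/(k+1)) (by positivity)
    (by rw [div_le_one (by positivity)]; linarith [Nat.cast_nonneg (α := ℝ) k])


/-- geometric convergence of the projected-gradient learning sequence -/
lemma my_theta_conv {Θ : Set E} (hΘcv : Convex ℝ Θ)
    {g : E → ℝ} {gradg : E → E}
    (hgdiff : ∀ ϑ, HasGradientAt g (gradg ϑ) ϑ)
    {ηg Gg : ℝ} (hηg : 0 < ηg) (hGg : 0 < Gg)
    (hstrg : StrongConvexOn Θ ηg g)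
    (hLipg : ∀ θ1 θ2, ‖gradg θ1 - gradg θ2‖ ≤ Gg * ‖θ1 - θ2‖)
    {θs : E} (hθsΘ : θs ∈ Θ) (hθsmin : ∀ ϑ ∈ Θ, g θs ≤ g ϑ)
    {PΘ : E → E} (hPΘ : ∀ y, PΘ y ∈ Θ ∧ ∀ w ∈ Θ, ‖y - PΘ y‖ ≤ ‖y - w‖)
    {θ : ℕ → E} (hθ0 : θ 0 ∈ Θ)
    {γg : ℝ} (hγg0 : 0 < γg) (hγg2 : γg < 2 / Gg)
    (hθit : ∀ k, θ (k + 1) = PΘ (θ k - γg • gradg (θ k))) :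
    ∃ B σ : ℝ, 0 ≤ B ∧ 0 ≤ σ ∧ σ < 1 ∧ ∀ k, ‖θ k - θs‖ ≤ B * σ ^ k := by
  -- memberships
  have hθmem : ∀ k, θ k ∈ Θ := by
    intro k
    induction k with
    | zero => exact hθ0
    | succ k ih => rw [hθit k]; exact (hPΘ _).1
  -- constants
  set c₀ : ℝ := 1 / γg - Gg / 2 with hc₀
  set C₂ : ℝ := 1 / γg + Gg with hC₂
  set C₃ : ℝ := 2 * C₂ ^ 2 / ηg with hC₃
  set ρ : ℝ := C₃ / (c₀ + C₃) with hρ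
  set h : ℕ → ℝ := fun k => g (θ k) - g θs with hh
  set Δ : ℕ → ℝ := fun k => ‖θ (k + 1) - θ k‖ with hΔ
  clear_value c₀ C₂ C₃ ρ h Δ
  have hc₀pos : 0 < c₀ := by
    have h1 : γg * Gg < 2 := by
      have := (lt_div_iff₀ hGg).mp hγg2
      linarith
    rw [hc₀, sub_pos, div_lt_div_iff₀ two_pos hγg0]
    nlinarith
  have hC₂pos : 0 < C₂ := by rw [hC₂]; positivity
  have hC₃pos : 0 < C₃ := by rw [hC₃]; positivity
  have hρ0 : 0 < ρ := by rw [hρ]; positivity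
  have hρ1 : ρ < 1 := by
    rw [hρ, div_lt_one (by positivity)]; linarith
  have hh0 : ∀ k, 0 ≤ h k := by
    intro k; rw [hh]; exact sub_nonneg.mpr (hθsmin _ (hθmem k))
  have hΔ0 : ∀ k, 0 ≤ Δ k := by
    intro k; rw [hΔ]; exact norm_nonneg _
  have hcvx : ConvexOn ℝ Θ g := UniformConvexOn.convexOn hstrg (fun r => by positivity)
  -- descent step
  have hdesc : ∀ k, h (k + 1) ≤ h k - c₀ * Δ k ^ 2 := by
    intro k
    have hp := my_proj_inner_le hΘcv hPΘ (θ k - γg • gradg (θ k)) (hθmem k)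
    rw [← hθit k] at hp
    have hy : θ k - γg • gradg (θ k) - θ (k + 1)
        = (θ k - θ (k + 1)) - γg • gradg (θ k) := by abel
    rw [hy, inner_sub_left, real_inner_smul_left] at hp
    have hself : ⟪θ k - θ (k + 1), θ k - θ (k + 1)⟫ = Δ k ^ 2 := by
      rw [real_inner_self_eq_norm_sq]; simp only [hΔ]; rw [norm_sub_rev]
    rw [hself] at hp
    -- hp : Δ k ^ 2 - γg * ⟪gradg (θ k), θ k - θ (k+1)⟫ ≤ 0
    have hd := my_descent hgdiff hGg hLipg (θ k) (θ (k + 1))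
    have hinner : ⟪gradg (θ k), θ (k + 1) - θ k⟫
        = - ⟪gradg (θ k), θ k - θ (k + 1)⟫ := by
      rw [show θ (k + 1) - θ k = -(θ k - θ (k + 1)) by abel, inner_neg_right]
    rw [hinner] at hd
    have hq : Δ k ^ 2 / γg ≤ ⟪gradg (θ k), θ k - θ (k + 1)⟫ := by
      rw [div_le_iff₀ hγg0]; nlinarith
    have : g (θ (k + 1)) ≤ g (θ k) - Δ k ^ 2 / γg + Gg / 2 * Δ k ^ 2 := by
      have hΔeq : ‖θ (k + 1) - θ k‖ = Δ k := by simp only [hΔ]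
      rw [hΔeq] at hd
      linarith
    have hgoal : g (θ (k + 1)) ≤ g (θ k) - c₀ * Δ k ^ 2 := by
      rw [hc₀]; rw [div_le_iff₀ hγg0] at *
      have : Δ k ^ 2 / γg = 1 / γg * Δ k ^ 2 := by ring
      linarith [this ▸ ‹g (θ (k + 1)) ≤ g (θ k) - Δ k ^ 2 / γg + Gg / 2 * Δ k ^ 2›]
    simp only [hh]; linarith
  -- gradient-mapping bound
  have hkey2 : ∀ k, h (k + 1) ≤ C₃ * Δ k ^ 2 := by
    intro k
    set D : ℝ := ‖θ (k + 1) - θs‖ with hD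
    clear_value D
    have hD0 : 0 ≤ D := by rw [hD]; exact norm_nonneg _
    -- convexity inequality at θ (k+1)
    have e1 : h (k + 1) ≤ ⟪gradg (θ (k + 1)), θ (k + 1) - θs⟫ := by
      have := my_convex_grad hgdiff hcvx (hθmem (k + 1)) hθsΘ
      have hneg : ⟪gradg (θ (k + 1)), θs - θ (k + 1)⟫
          = - ⟪gradg (θ (k + 1)), θ (k + 1) - θs⟫ := by
        rw [show θs - θ (k + 1) = -(θ (k + 1) - θs) by abel, inner_neg_right]
      rw [hneg] at this
      simp only [hh]; linarith
    -- projection inequality with w = θs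
    have e2 : γg * ⟪gradg (θ k), θ (k + 1) - θs⟫ ≤ ⟪θ k - θ (k + 1), θ (k + 1) - θs⟫ := by
      have hp := my_proj_inner_le hΘcv hPΘ (θ k - γg • gradg (θ k)) hθsΘ
      rw [← hθit k] at hp
      have hy : θ k - γg • gradg (θ k) - θ (k + 1)
          = (θ k - θ (k + 1)) - γg • gradg (θ k) := by abel
      rw [hy, inner_sub_left, real_inner_smul_left] at hp
      have hneg1 : ⟪θ k - θ (k + 1), θs - θ (k + 1)⟫
          = - ⟪θ k - θ (k + 1), θ (k + 1) - θs⟫ := by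
        rw [show θs - θ (k + 1) = -(θ (k + 1) - θs) by abel, inner_neg_right]
      have hneg2 : ⟪gradg (θ k), θs - θ (k + 1)⟫
          = - ⟪gradg (θ k), θ (k + 1) - θs⟫ := by
        rw [show θs - θ (k + 1) = -(θ (k + 1) - θs) by abel, inner_neg_right]
      rw [hneg1, hneg2] at hp
      linarith
    have e3 : ⟪θ k - θ (k + 1), θ (k + 1) - θs⟫ ≤ Δ k * D := by
      have h9 := real_inner_le_norm (θ k - θ (k + 1)) (θ (k + 1) - θs)
      rw [norm_sub_rev (θ k)] at h9
      simpa only [hΔ, hD] using h9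
    have e4 : ⟪gradg (θ (k + 1)) - gradg (θ k), θ (k + 1) - θs⟫ ≤ Gg * Δ k * D := by
      calc ⟪gradg (θ (k + 1)) - gradg (θ k), θ (k + 1) - θs⟫
          ≤ ‖gradg (θ (k + 1)) - gradg (θ k)‖ * D := by
            rw [hD]; exact real_inner_le_norm _ _
        _ ≤ Gg * ‖θ (k + 1) - θ k‖ * D := by
            have := hLipg (θ (k + 1)) (θ k)
            nlinarith
        _ = Gg * Δ k * D := by simp only [hΔ]
    have e5 : h (k + 1) ≤ C₂ * Δ k * D := by
      have hsplit : ⟪gradg (θ (k + 1)), θ (k + 1) - θs⟫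
          = ⟪gradg (θ k), θ (k + 1) - θs⟫
            + ⟪gradg (θ (k + 1)) - gradg (θ k), θ (k + 1) - θs⟫ := by
        rw [inner_sub_left]; ring
      have e2' : ⟪gradg (θ k), θ (k + 1) - θs⟫ ≤ 1 / γg * (Δ k * D) := by
        rw [div_mul_eq_mul_div, le_div_iff₀ hγg0]
        calc ⟪gradg (θ k), θ (k + 1) - θs⟫ * γg
            = γg * ⟪gradg (θ k), θ (k + 1) - θs⟫ := by ring
          _ ≤ ⟪θ k - θ (k + 1), θ (k + 1) - θs⟫ := e2
          _ ≤ Δ k * D := e3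
          _ = 1 * (Δ k * D) := by ring
      rw [hC₂]
      calc h (k + 1) ≤ ⟪gradg (θ (k + 1)), θ (k + 1) - θs⟫ := e1
        _ = ⟪gradg (θ k), θ (k + 1) - θs⟫
            + ⟪gradg (θ (k + 1)) - gradg (θ k), θ (k + 1) - θs⟫ := hsplit
        _ ≤ 1 / γg * (Δ k * D) + Gg * Δ k * D := by linarith
        _ = (1 / γg + Gg) * Δ k * D := by ring
    have e6 : ηg / 2 * D ^ 2 ≤ h (k + 1) := by
      simp only [hD, hh]
      exact my_strong_growth hstrg hθsΘ hθsmin (hθmem (k + 1))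
    -- combine
    rcases eq_or_lt_of_le (hh0 (k + 1)) with h0 | hpos
    · rw [← h0]; exact mul_nonneg hC₃pos.le (sq_nonneg _)
    · have hsq : h (k + 1) ^ 2 ≤ C₂ ^ 2 * Δ k ^ 2 * D ^ 2 := by
        have t0 := mul_le_mul e5 e5 (hh0 (k + 1))
          (mul_nonneg (mul_nonneg hC₂pos.le (hΔ0 k)) hD0)
        calc h (k + 1) ^ 2 = h (k + 1) * h (k + 1) := sq (h (k+1)) ▸ by ring
          _ ≤ C₂ * Δ k * D * (C₂ * Δ k * D) := t0
          _ = C₂ ^ 2 * Δ k ^ 2 * D ^ 2 := by ring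
      have h7 : ηg * h (k + 1) ^ 2 ≤ C₂ ^ 2 * Δ k ^ 2 * (2 * h (k + 1)) := by
        have t1 : ηg * h (k + 1) ^ 2 ≤ ηg * (C₂ ^ 2 * Δ k ^ 2 * D ^ 2) :=
          mul_le_mul_of_nonneg_left hsq hηg.le
        have t2 : ηg * D ^ 2 ≤ 2 * h (k + 1) := by linarith
        have t3 : C₂ ^ 2 * Δ k ^ 2 * (ηg * D ^ 2) ≤ C₂ ^ 2 * Δ k ^ 2 * (2 * h (k + 1)) :=
          mul_le_mul_of_nonneg_left t2 (mul_nonneg (sq_nonneg _) (sq_nonneg _))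
        calc ηg * h (k + 1) ^ 2 ≤ ηg * (C₂ ^ 2 * Δ k ^ 2 * D ^ 2) := t1
          _ = C₂ ^ 2 * Δ k ^ 2 * (ηg * D ^ 2) := by ring
          _ ≤ C₂ ^ 2 * Δ k ^ 2 * (2 * h (k + 1)) := t3
      have h8 : ηg * h (k + 1) ≤ 2 * C₂ ^ 2 * Δ k ^ 2 := by
        apply le_of_mul_le_mul_right _ hpos
        nlinarith [h7]
      rw [hC₃, div_mul_eq_mul_div, le_div_iff₀ hηg]
      linarith
  -- contraction
  have hcontr : ∀ k, h (k + 1) ≤ ρ * h k := by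
    intro k
    have h1 : c₀ * Δ k ^ 2 ≤ h k - h (k + 1) := by linarith [hdesc k]
    have h2 : c₀ * h (k + 1) ≤ c₀ * (C₃ * Δ k ^ 2) :=
      mul_le_mul_of_nonneg_left (hkey2 k) hc₀pos.le
    have h3 : (c₀ + C₃) * h (k + 1) ≤ C₃ * h k := by nlinarith [hkey2 k]
    rw [hρ, div_mul_eq_mul_div, le_div_iff₀ (by positivity : (0:ℝ) < c₀ + C₃)]
    linarith
  have hgeo : ∀ k, h k ≤ h 0 * ρ ^ k := by
    intro k
    induction k with
    | zero => simp
    | succ k ih =>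
      calc h (k + 1) ≤ ρ * h k := hcontr k
        _ ≤ ρ * (h 0 * ρ ^ k) := mul_le_mul_of_nonneg_left ih hρ0.le
        _ = h 0 * ρ ^ (k + 1) := by ring
  -- conclude
  refine ⟨Real.sqrt (2 * h 0 / ηg), Real.sqrt ρ, Real.sqrt_nonneg _, Real.sqrt_nonneg _, ?_, ?_⟩
  · have : Real.sqrt ρ ^ 2 < 1 := by
      rw [Real.sq_sqrt hρ0.le]; exact hρ1
    nlinarith [Real.sqrt_nonneg ρ]
  · intro k
    have hgr : ηg / 2 * ‖θ k - θs‖ ^ 2 ≤ h k := by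
      simp only [hh]
      exact my_strong_growth hstrg hθsΘ hθsmin (hθmem k)
    have hB2 : (Real.sqrt (2 * h 0 / ηg) * Real.sqrt ρ ^ k) ^ 2 = 2 * h 0 / ηg * ρ ^ k := by
      rw [mul_pow, ← pow_mul, mul_comm k 2, pow_mul, Real.sq_sqrt hρ0.le,
        Real.sq_sqrt (div_nonneg (by linarith [hh0 0]) hηg.le)]
    have hd2 : ‖θ k - θs‖ ^ 2 ≤ (Real.sqrt (2 * h 0 / ηg) * Real.sqrt ρ ^ k) ^ 2 := by
      rw [hB2]
      rw [div_mul_eq_mul_div, le_div_iff₀ hηg]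
      nlinarith [hgeo k, hgr, pow_nonneg hρ0.le k]
    calc ‖θ k - θs‖ = Real.sqrt (‖θ k - θs‖ ^ 2) := (Real.sqrt_sq (norm_nonneg _)).symm
      _ ≤ Real.sqrt ((Real.sqrt (2 * h 0 / ηg) * Real.sqrt ρ ^ k) ^ 2) := Real.sqrt_le_sqrt hd2
      _ = Real.sqrt (2 * h 0 / ηg) * Real.sqrt ρ ^ k :=
          Real.sqrt_sq (by positivity)



/-- one-step inequality for the perturbed extragradient scheme -/
lemma my_eg_step {X : Set E} (hXcv : Convex ℝ X) {P : E → E}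
    (hP : ∀ y, P y ∈ X ∧ ∀ w ∈ X, ‖y - P y‖ ≤ ‖y - w‖)
    {τ LFx δ : ℝ} (hτ0 : 0 ≤ τ) (hδ0 : 0 ≤ δ)
    {u zn xn xs Fku Fkz Fsz Fsxs : E} (hxs : xs ∈ X)
    (hz : zn = P (u - τ • Fku)) (hx : xn = P (u - τ • Fkz))
    (hsol : 0 ≤ ⟪Fsxs, zn - xs⟫) (hmono : 0 ≤ ⟪Fsz - Fsxs, zn - xs⟫)
    (hδ : ‖Fkz - Fsz‖ ≤ δ) (hLip : ‖Fkz - Fku‖ ≤ LFx * ‖zn - u‖) :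
    ‖xn - xs‖ ^ 2 ≤ ‖u - xs‖ ^ 2 - (1 - τ ^ 2 * LFx ^ 2) * ‖u - zn‖ ^ 2
      + 2 * τ * δ * ‖xs - zn‖ := by
  have hznX : zn ∈ X := hz ▸ (hP _).1
  have hxnX : xn ∈ X := hx ▸ (hP _).1
  -- (I) projection inequality for the x-update
  have hI : ‖xn - xs‖ ^ 2 ≤ ‖u - τ • Fkz - xs‖ ^ 2 - ‖u - τ • Fkz - xn‖ ^ 2 := by
    rw [hx]; exact my_proj_sq_le hXcv hP _ hxs
  -- (II) expansions
  have hII1 : ‖u - τ • Fkz - xs‖ ^ 2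
      = ‖u - xs‖ ^ 2 - 2 * (τ * ⟪Fkz, u - xs⟫) + τ ^ 2 * ‖Fkz‖ ^ 2 := by
    have h1 : u - τ • Fkz - xs = (u - xs) - τ • Fkz := by abel
    rw [h1, @norm_sub_sq_real, real_inner_smul_right, norm_smul, mul_pow]
    simp only [Real.norm_eq_abs, sq_abs]
    rw [real_inner_comm]
    try ring
  have hII2 : ‖u - τ • Fkz - xn‖ ^ 2
      = ‖u - xn‖ ^ 2 - 2 * (τ * ⟪Fkz, u - xn⟫) + τ ^ 2 * ‖Fkz‖ ^ 2 := by
    have h1 : u - τ • Fkz - xn = (u - xn) - τ • Fkz := by abel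
    rw [h1, @norm_sub_sq_real, real_inner_smul_right, norm_smul, mul_pow]
    simp only [Real.norm_eq_abs, sq_abs]
    rw [real_inner_comm]
    try ring
  -- (III) splitting
  have hIII : ⟪Fkz, xs - xn⟫ = ⟪Fkz, xs - zn⟫ + ⟪Fkz, zn - xn⟫ := by
    rw [← inner_add_right]
    congr 1
    abel
  have hIIIb : ⟪Fkz, u - xn⟫ - ⟪Fkz, u - xs⟫ = ⟪Fkz, xs - xn⟫ := by
    rw [← inner_sub_right]
    congr 1
    abel
  -- (IV) the misspecified-VI term
  have hIV : ⟪Fkz, xs - zn⟫ ≤ δ * ‖xs - zn‖ := by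
    have h1 : ⟪Fkz, xs - zn⟫ = ⟪Fsz, xs - zn⟫ + ⟪Fkz - Fsz, xs - zn⟫ := by
      rw [inner_sub_left]; ring
    have h2 : ⟪Fsz, xs - zn⟫ ≤ 0 := by
      have h3 : ⟪Fsz, zn - xs⟫ ≥ 0 := by
        have := inner_sub_left (𝕜 := ℝ) Fsz Fsxs (zn - xs)
        linarith [hmono, hsol, this]
      have h4 : ⟪Fsz, xs - zn⟫ = - ⟪Fsz, zn - xs⟫ := by
        rw [show xs - zn = -(zn - xs) by abel, inner_neg_right]
      linarith
    have h5 : ⟪Fkz - Fsz, xs - zn⟫ ≤ δ * ‖xs - zn‖ := by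
      calc ⟪Fkz - Fsz, xs - zn⟫ ≤ ‖Fkz - Fsz‖ * ‖xs - zn‖ := real_inner_le_norm _ _
        _ ≤ δ * ‖xs - zn‖ := mul_le_mul_of_nonneg_right hδ (norm_nonneg _)
    linarith
  -- (V) the extragradient term
  have hVa : τ * ⟪Fku, zn - xn⟫ ≤ ⟪u - zn, zn - xn⟫ := by
    have hp := my_proj_inner_le hXcv hP (u - τ • Fku) hxnX
    rw [← hz] at hp
    have h1 : u - τ • Fku - zn = (u - zn) - τ • Fku := by abel
    rw [h1, inner_sub_left, real_inner_smul_left] at hp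
    have h2 : ⟪u - zn, xn - zn⟫ = - ⟪u - zn, zn - xn⟫ := by
      rw [show xn - zn = -(zn - xn) by abel, inner_neg_right]
    have h3 : ⟪Fku, xn - zn⟫ = - ⟪Fku, zn - xn⟫ := by
      rw [show xn - zn = -(zn - xn) by abel, inner_neg_right]
    rw [h2, h3] at hp
    linarith
  have hVb : ⟪Fkz - Fku, zn - xn⟫ ≤ LFx * ‖u - zn‖ * ‖zn - xn‖ := by
    calc ⟪Fkz - Fku, zn - xn⟫ ≤ ‖Fkz - Fku‖ * ‖zn - xn‖ := real_inner_le_norm _ _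
      _ ≤ LFx * ‖zn - u‖ * ‖zn - xn‖ :=
          mul_le_mul_of_nonneg_right hLip (norm_nonneg _)
      _ = LFx * ‖u - zn‖ * ‖zn - xn‖ := by rw [norm_sub_rev zn u]
  have hVsplit : ⟪Fkz, zn - xn⟫ = ⟪Fku, zn - xn⟫ + ⟪Fkz - Fku, zn - xn⟫ := by
    rw [inner_sub_left]; ring
  -- (VI) three-point identity
  have hVI : ‖u - xn‖ ^ 2
      = ‖u - zn‖ ^ 2 + 2 * ⟪u - zn, zn - xn⟫ + ‖zn - xn‖ ^ 2 := by
    have h1 : u - xn = (u - zn) + (zn - xn) := by abel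
    rw [h1, @norm_add_sq_real]
    try ring
  -- (VII) Young's inequality
  have hVII : 2 * (τ * (LFx * ‖u - zn‖ * ‖zn - xn‖))
      ≤ τ ^ 2 * LFx ^ 2 * ‖u - zn‖ ^ 2 + ‖zn - xn‖ ^ 2 := by
    nlinarith [sq_nonneg (τ * LFx * ‖u - zn‖ - ‖zn - xn‖)]
  -- assemble
  have hmul1 : 2 * τ * ⟪Fkz, xs - zn⟫ ≤ 2 * τ * (δ * ‖xs - zn‖) := by
    apply mul_le_mul_of_nonneg_left hIV
    linarith
  have hmul2 : 2 * τ * ⟪Fkz, zn - xn⟫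
      ≤ 2 * ⟪u - zn, zn - xn⟫ + 2 * τ * (LFx * ‖u - zn‖ * ‖zn - xn‖) := by
    rw [hVsplit]
    have h6 : 2 * (τ * ⟪Fku, zn - xn⟫) ≤ 2 * ⟪u - zn, zn - xn⟫ := by linarith
    have h7 : 2 * τ * ⟪Fkz - Fku, zn - xn⟫ ≤ 2 * τ * (LFx * ‖u - zn‖ * ‖zn - xn‖) := by
      apply mul_le_mul_of_nonneg_left hVb
      linarith
    calc 2 * τ * (⟪Fku, zn - xn⟫ + ⟪Fkz - Fku, zn - xn⟫)
        = 2 * (τ * ⟪Fku, zn - xn⟫) + 2 * τ * ⟪Fkz - Fku, zn - xn⟫ := by ring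
      _ ≤ 2 * ⟪u - zn, zn - xn⟫ + 2 * τ * (LFx * ‖u - zn‖ * ‖zn - xn‖) := by linarith
  nlinarith [hI, hII1, hII2, hIII, hIIIb, hVI, hVII, hmul1, hmul2]


/-- quasi-Fejér convergence with geometrically decaying errors -/
lemma my_qf {a r : ℕ → ℝ} {E₀ σ : ℝ} (ha : ∀ k, 0 ≤ a k) (hr : ∀ k, 0 ≤ r k)
    (hE₀ : 0 ≤ E₀) (hσ0 : 0 ≤ σ) (hσ1 : σ < 1)
    (hrec : ∀ k, a (k + 1) ≤ a k - r k + E₀ * σ ^ k * (a k + 1)) :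
    (∃ L, Tendsto a atTop (𝓝 L)) ∧ Tendsto r atTop (𝓝 0) ∧
      ∀ k, a k ≤ (a 0 + 1) * Real.exp (E₀ / (1 - σ)) := by
  have h1σ : 0 < 1 - σ := by linarith
  have hsum : ∀ k : ℕ, ∑ j ∈ Finset.range k, σ ^ j ≤ 1 / (1 - σ) := by
    intro k
    rw [geom_sum_eq (by intro h; rw [h] at hσ1; linarith)]
    have heq : (σ ^ k - 1) / (σ - 1) = (1 - σ ^ k) / (1 - σ) := by
      rw [div_eq_div_iff (by linarith) (by linarith)]; ring
    rw [heq, div_le_div_iff₀ h1σ h1σ]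
    nlinarith [pow_nonneg hσ0 k]
  have hM : ∀ k, a k + 1 ≤ (a 0 + 1) * Real.exp (E₀ * ∑ j ∈ Finset.range k, σ ^ j) := by
    intro k
    induction k with
    | zero => simp
    | succ k ih =>
      have hp : (0:ℝ) ≤ E₀ * σ ^ k := by positivity
      calc a (k + 1) + 1 ≤ (a k + 1) * (1 + E₀ * σ ^ k) := by nlinarith [hrec k, hr k]
        _ ≤ (a k + 1) * Real.exp (E₀ * σ ^ k) := by
            apply mul_le_mul_of_nonneg_left _ (by linarith [ha k])
            linarith [Real.add_one_le_exp (E₀ * σ ^ k)]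
        _ ≤ (a 0 + 1) * Real.exp (E₀ * ∑ j ∈ Finset.range k, σ ^ j)
              * Real.exp (E₀ * σ ^ k) :=
            mul_le_mul_of_nonneg_right ih (Real.exp_pos _).le
        _ = (a 0 + 1) * Real.exp (E₀ * ∑ j ∈ Finset.range (k + 1), σ ^ j) := by
            rw [Finset.sum_range_succ, mul_add, Real.exp_add]; ring
  set M : ℝ := (a 0 + 1) * Real.exp (E₀ / (1 - σ)) with hMdef
  clear_value M
  have hMb : ∀ k, a k + 1 ≤ M := by
    intro k
    calc a k + 1 ≤ (a 0 + 1) * Real.exp (E₀ * ∑ j ∈ Finset.range k, σ ^ j) := hM k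
      _ ≤ M := by
          rw [hMdef]
          apply mul_le_mul_of_nonneg_left _ (by linarith [ha 0])
          apply Real.exp_le_exp.mpr
          calc E₀ * ∑ j ∈ Finset.range k, σ ^ j ≤ E₀ * (1 / (1 - σ)) :=
              mul_le_mul_of_nonneg_left (hsum k) hE₀
            _ = E₀ / (1 - σ) := by ring
  have hM0 : 0 ≤ M := by linarith [hMb 0, ha 0]
  set K : ℝ := M * E₀ / (1 - σ) with hKdef
  clear_value K
  have hK0 : 0 ≤ K := by rw [hKdef]; positivity
  have hKid : K * (1 - σ) = M * E₀ := by
    rw [hKdef]; field_simp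
  set s : ℕ → ℝ := fun k => a k + K * σ ^ k with hsdef
  clear_value s
  have hs0 : ∀ k, 0 ≤ s k := by
    intro k; rw [hsdef]
    have : (0:ℝ) ≤ K * σ ^ k := by positivity
    simp only []
    linarith [ha k]
  have hs : ∀ k, s (k + 1) + r k ≤ s k := by
    intro k
    have h2 : E₀ * σ ^ k * (a k + 1) ≤ E₀ * σ ^ k * M :=
      mul_le_mul_of_nonneg_left (hMb k) (by positivity)
    have h4 : E₀ * M * σ ^ k = K * σ ^ k - K * σ * σ ^ k := by
      have := congrArg (· * σ ^ k) hKid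
      nlinarith [this]
    have h5 : s (k + 1) = a (k + 1) + K * σ * σ ^ k := by
      rw [hsdef]; simp only []; rw [pow_succ]; ring
    have h6 : s k = a k + K * σ ^ k := by rw [hsdef]
    nlinarith [hrec k, h2, h4]
  have hanti : Antitone s := antitone_nat_of_succ_le (fun k => by linarith [hs k, hr k])
  have hbdd : BddBelow (Set.range s) := ⟨0, fun v ⟨k, hk⟩ => hk ▸ hs0 k⟩
  have hLs : Tendsto s atTop (𝓝 (⨅ k, s k)) := tendsto_atTop_ciInf hanti hbdd
  have hgeo : Tendsto (fun k : ℕ => K * σ ^ k) atTop (𝓝 0) := by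
    simpa using (tendsto_pow_atTop_nhds_zero_of_lt_one hσ0 hσ1).const_mul K
  refine ⟨⟨⨅ k, s k, ?_⟩, ?_, fun k => by linarith [hMb k]⟩
  · have heq : a = fun k => s k - K * σ ^ k := by
      funext k; rw [hsdef]; simp only []; ring
    rw [heq]
    simpa using hLs.sub hgeo
  · have hsucc : Tendsto (fun k => s (k + 1)) atTop (𝓝 (⨅ k, s k)) :=
      hLs.comp (tendsto_add_atTop_nat 1)
    have hdiff : Tendsto (fun k => s k - s (k + 1)) atTop (𝓝 0) := by
      simpa using hLs.sub hsucc
    exact squeeze_zero hr (fun k => by linarith [hs k]) hdiff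

end myhelpers

/-- Convergence of the joint extragradient scheme for a misspecified monotone
variational inequality: with `τ² < 1/(L_{F,x}² + 2L_{F,θ}‖θ₀ − θ*‖)`, `x_k` converges to
a solution of `VI(X, F(·,θ*))` and `θ_k → θ*`. -/
theorem stmt_13
    {n m : ℕ}
    (X : Set (EuclideanSpace ℝ (Fin n))) (Θ : Set (EuclideanSpace ℝ (Fin m)))
    (hXne : X.Nonempty) (hXcl : IsClosed X) (hXcv : Convex ℝ X)
    (hΘne : Θ.Nonempty) (hΘcl : IsClosed Θ) (hΘcv : Convex ℝ Θ)
    (hΘbdd : Bornology.IsBounded Θ)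
    (F : EuclideanSpace ℝ (Fin n) → EuclideanSpace ℝ (Fin m) → EuclideanSpace ℝ (Fin n))
    (hFcont : Continuous fun p : EuclideanSpace ℝ (Fin n) × EuclideanSpace ℝ (Fin m) =>
      F p.1 p.2)
    (g : EuclideanSpace ℝ (Fin m) → ℝ)
    (gradg : EuclideanSpace ℝ (Fin m) → EuclideanSpace ℝ (Fin m))
    -- g is continuously differentiable and strongly convex with minimizer θ*
    (hgdiff : ∀ ϑ, HasGradientAt g (gradg ϑ) ϑ)
    (hggradcont : Continuous gradg)
    (ηg Gg : ℝ) (hηg : 0 < ηg) (hGg : 0 < Gg)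
    (hstrg : StrongConvexOn Θ ηg g)
    (hLipg : ∀ θ1 θ2, ‖gradg θ1 - gradg θ2‖ ≤ Gg * ‖θ1 - θ2‖)
    (θs : EuclideanSpace ℝ (Fin m)) (hθsΘ : θs ∈ Θ) (hθsmin : ∀ ϑ ∈ Θ, g θs ≤ g ϑ)
    -- monotonicity and Lipschitz continuity of F
    (hmono : ∀ x1 ∈ X, ∀ x2 ∈ X, 0 ≤ ⟪F x1 θs - F x2 θs, x1 - x2⟫)
    (LFx LFθ : ℝ) (hLFx : 0 < LFx) (hLFθ : 0 < LFθ)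
    (hLipFx : ∀ θ' ∈ Θ, ∀ x1 ∈ X, ∀ x2 ∈ X, ‖F x1 θ' - F x2 θ'‖ ≤ LFx * ‖x1 - x2‖)
    (hLipFθ : ∀ y ∈ X, ∀ θ1 ∈ Θ, ∀ θ2 ∈ Θ, ‖F y θ1 - F y θ2‖ ≤ LFθ * ‖θ1 - θ2‖)
    -- the solution set of VI(X, F(·,θ*)) is nonempty
    (hXstar : ∃ y ∈ X, ∀ w ∈ X, 0 ≤ ⟪F y θs, w - y⟫)
    -- Euclidean projections onto X and Θ
    (PX : EuclideanSpace ℝ (Fin n) → EuclideanSpace ℝ (Fin n))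
    (PΘ : EuclideanSpace ℝ (Fin m) → EuclideanSpace ℝ (Fin m))
    (hPX : ∀ y, PX y ∈ X ∧ ∀ z ∈ X, ‖y - PX y‖ ≤ ‖y - z‖)
    (hPΘ : ∀ y, PΘ y ∈ Θ ∧ ∀ z ∈ Θ, ‖y - PΘ y‖ ≤ ‖y - z‖)
    -- the joint extragradient scheme
    (x z : ℕ → EuclideanSpace ℝ (Fin n)) (θ : ℕ → EuclideanSpace ℝ (Fin m))
    (hx0 : x 0 ∈ X) (hθ0 : θ 0 ∈ Θ)
    -- steplengths
    (τ γg : ℝ) (hτ0 : 0 < τ)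
    (hτ : τ ^ 2 < 1 / (LFx ^ 2 + 2 * LFθ * ‖θ 0 - θs‖))
    (hγg0 : 0 < γg) (hγg2 : γg < 2 / Gg)
    (hzit : ∀ k, z (k + 1) = PX (x k - τ • F (x k) (θ k)))
    (hxit : ∀ k, x (k + 1) = PX (x k - τ • F (z (k + 1)) (θ k)))
    (hθit : ∀ k, θ (k + 1) = PΘ (θ k - γg • gradg (θ k))) :
    (∃ xl ∈ X, (∀ w ∈ X, 0 ≤ ⟪F xl θs, w - xl⟫) ∧ Tendsto x atTop (𝓝 xl)) ∧
      Tendsto θ atTop (𝓝 θs) := by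
    -- memberships
  have hθmem : ∀ k, θ k ∈ Θ := by
    intro k
    induction k with
    | zero => exact hθ0
    | succ k ih => rw [hθit k]; exact (hPΘ _).1
  have hxmem : ∀ k, x k ∈ X := by
    intro k
    induction k with
    | zero => exact hx0
    | succ k ih => rw [hxit k]; exact (hPX _).1
  have hzmem : ∀ k, z (k + 1) ∈ X := by
    intro k; rw [hzit k]; exact (hPX _).1
  -- geometric convergence of θ
  obtain ⟨B, σ, hB0, hσ0, hσ1, hd⟩ :=
    my_theta_conv hΘcv hgdiff hηg hGg hstrg hLipg hθsΘ hθsmin hPΘ hθ0 hγg0 hγg2 hθit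
  have hgeo0 : Tendsto (fun k : ℕ => B * σ ^ k) atTop (𝓝 0) := by
    simpa using (tendsto_pow_atTop_nhds_zero_of_lt_one hσ0 hσ1).const_mul B
  have hθtend : Tendsto θ atTop (𝓝 θs) := by
    rw [tendsto_iff_norm_sub_tendsto_zero]
    exact squeeze_zero (fun k => norm_nonneg _) hd hgeo0
  -- positivity of the extragradient margin
  have hc : 0 < 1 - τ ^ 2 * LFx ^ 2 := by
    have hden : 0 < LFx ^ 2 + 2 * LFθ * ‖θ 0 - θs‖ := by positivity
    have h1 : (1:ℝ) / (LFx ^ 2 + 2 * LFθ * ‖θ 0 - θs‖) ≤ 1 / LFx ^ 2 := by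
      apply one_div_le_one_div_of_le (by positivity)
      nlinarith [norm_nonneg (θ 0 - θs), hLFθ]
    have h2 : τ ^ 2 < 1 / LFx ^ 2 := lt_of_lt_of_le hτ h1
    have h3 : τ ^ 2 * LFx ^ 2 < 1 := by
      rw [lt_div_iff₀ (by positivity : (0:ℝ) < LFx ^ 2)] at h2
      linarith
    linarith
  set c : ℝ := 1 - τ ^ 2 * LFx ^ 2 with hcdef
  clear_value c
  -- one-step inequality for any solution
  have hstep : ∀ xs, xs ∈ X → (∀ w ∈ X, 0 ≤ ⟪F xs θs, w - xs⟫) → ∀ k,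
      ‖x (k + 1) - xs‖ ^ 2 ≤ ‖x k - xs‖ ^ 2 - c * ‖x k - z (k + 1)‖ ^ 2
        + 2 * τ * (LFθ * (B * σ ^ k)) * ‖xs - z (k + 1)‖ := by
    intro xs hxs hsol k
    have hδk : ‖F (z (k + 1)) (θ k) - F (z (k + 1)) θs‖ ≤ LFθ * (B * σ ^ k) := by
      calc ‖F (z (k + 1)) (θ k) - F (z (k + 1)) θs‖ ≤ LFθ * ‖θ k - θs‖ :=
          hLipFθ _ (hzmem k) _ (hθmem k) _ hθsΘ
        _ ≤ LFθ * (B * σ ^ k) := mul_le_mul_of_nonneg_left (hd k) hLFθ.le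
    have := my_eg_step hXcv hPX hτ0.le (by positivity : (0:ℝ) ≤ LFθ * (B * σ ^ k))
      hxs (hzit k) (hxit k) (hsol _ (hzmem k)) (hmono _ (hzmem k) _ hxs) hδk
      (hLipFx _ (hθmem k) _ (hzmem k) _ (hxmem k))
    rw [hcdef]
    exact this
  -- quasi-Fejér analysis, valid for an arbitrary solution xs
  have key : ∀ xs, xs ∈ X → (∀ w ∈ X, 0 ≤ ⟪F xs θs, w - xs⟫) →
      (∃ L, Tendsto (fun k => ‖x k - xs‖ ^ 2) atTop (𝓝 L)) ∧
      Tendsto (fun k => ‖x k - z (k + 1)‖) atTop (𝓝 0) ∧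
      (∃ Mb : ℝ, ∀ k, ‖x k - xs‖ ≤ Mb) := by
    intro xs hxs hsol
    set P : ℝ := τ * LFθ * B with hPdef
    have hP0 : 0 ≤ P := by rw [hPdef]; positivity
    clear_value P
    set E₀ : ℝ := P + 2 * P ^ 2 / c with hE₀def
    have hE₀0 : 0 ≤ E₀ := by rw [hE₀def]; positivity
    clear_value E₀
    have hrec : ∀ k, ‖x (k + 1) - xs‖ ^ 2 ≤ ‖x k - xs‖ ^ 2
        - c / 2 * ‖x k - z (k + 1)‖ ^ 2 + E₀ * σ ^ k * (‖x k - xs‖ ^ 2 + 1) := by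
      intro k
      have h0 := hstep xs hxs hsol k
      set nn : ℝ := ‖x k - xs‖ with hnn
      set ww : ℝ := ‖x k - z (k + 1)‖ with hww
      set t : ℝ := σ ^ k with ht
      have hnn0 : 0 ≤ nn := norm_nonneg _
      have hww0 : 0 ≤ ww := norm_nonneg _
      have ht0 : 0 ≤ t := by rw [ht]; positivity
      have ht1 : t ≤ 1 := by rw [ht]; exact pow_le_one₀ hσ0 hσ1.le
      clear_value nn ww t
      have htri : ‖xs - z (k + 1)‖ ≤ nn + ww := by
        have h1 : xs - z (k + 1) = -(x k - xs) + (x k - z (k + 1)) := by abel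
        rw [h1]
        calc ‖-(x k - xs) + (x k - z (k + 1))‖
            ≤ ‖-(x k - xs)‖ + ‖x k - z (k + 1)‖ := norm_add_le _ _
          _ = nn + ww := by rw [norm_neg, ← hnn, ← hww]
      have hPt0 : 0 ≤ P * t := mul_nonneg hP0 ht0
      have h2 : 2 * τ * (LFθ * (B * t)) * ‖xs - z (k + 1)‖ ≤ 2 * P * t * (nn + ww) := by
        have he : 2 * τ * (LFθ * (B * t)) = 2 * P * t := by rw [hPdef]; ring
        rw [he]
        apply mul_le_mul_of_nonneg_left htri
        positivity
      have hi : 2 * P * t * nn ≤ P * t * (nn ^ 2 + 1) := by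
        nlinarith [mul_nonneg hPt0 (sq_nonneg (nn - 1))]
      have hii : 2 * P * t * ww ≤ c / 2 * ww ^ 2 + 2 / c * P ^ 2 * t ^ 2 := by
        rw [← sub_nonneg]
        have heq : c / 2 * ww ^ 2 + 2 / c * P ^ 2 * t ^ 2 - 2 * P * t * ww
            = (c * ww - 2 * P * t) ^ 2 / (2 * c) := by
          field_simp
          ring
        rw [heq]
        positivity
      have hiii : 2 / c * P ^ 2 * t ^ 2 ≤ 2 * P ^ 2 / c * t := by
        have ht2 : t ^ 2 ≤ t := by nlinarith
        have : 2 / c * P ^ 2 * t ^ 2 = 2 * P ^ 2 / c * t ^ 2 := by ring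
        rw [this]
        exact mul_le_mul_of_nonneg_left ht2 (by positivity)
      have hE : E₀ * t * (nn ^ 2 + 1) = P * t * (nn ^ 2 + 1) + 2 * P ^ 2 / c * t * (nn ^ 2 + 1) := by
        rw [hE₀def]; ring
      have hlast : 2 * P ^ 2 / c * t ≤ 2 * P ^ 2 / c * t * (nn ^ 2 + 1) := by
        nlinarith [mul_nonneg (mul_nonneg (by positivity : (0:ℝ) ≤ 2 * P ^ 2 / c) ht0) (sq_nonneg nn)]
      nlinarith [h0, h2, hi, hii, hiii]
    obtain ⟨⟨L, hL⟩, hrt, hbd⟩ := my_qf (a := fun k => ‖x k - xs‖ ^ 2)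
      (r := fun k => c / 2 * ‖x k - z (k + 1)‖ ^ 2) (fun k => sq_nonneg _)
      (fun k => by positivity) hE₀0 hσ0 hσ1 hrec
    refine ⟨⟨L, hL⟩, ?_, ?_⟩
    · have hw2 : Tendsto (fun k => ‖x k - z (k + 1)‖ ^ 2) atTop (𝓝 0) := by
        have h3 := hrt.const_mul (2 / c)
        have heq : (fun k => 2 / c * (c / 2 * ‖x k - z (k + 1)‖ ^ 2))
            = fun k => ‖x k - z (k + 1)‖ ^ 2 := by
          funext k
          have hcc : c ≠ 0 := ne_of_gt hc
          field_simp
        rw [heq] at h3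
        simpa using h3
      have h4 := hw2.sqrt
      have heq2 : (fun k => Real.sqrt (‖x k - z (k + 1)‖ ^ 2))
          = fun k => ‖x k - z (k + 1)‖ :=
        funext fun k => Real.sqrt_sq (norm_nonneg _)
      rw [heq2] at h4
      simpa using h4
    · refine ⟨Real.sqrt ((‖x 0 - xs‖ ^ 2 + 1) * Real.exp (E₀ / (1 - σ))), fun k => ?_⟩
      calc ‖x k - xs‖ = Real.sqrt (‖x k - xs‖ ^ 2) := (Real.sqrt_sq (norm_nonneg _)).symm
        _ ≤ Real.sqrt ((‖x 0 - xs‖ ^ 2 + 1) * Real.exp (E₀ / (1 - σ))) :=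
            Real.sqrt_le_sqrt (hbd k)
  -- boundedness from the assumed solution, and Bolzano–Weierstrass
  obtain ⟨xs0, hxs0X, hxs0sol⟩ := hXstar
  obtain ⟨-, hwten, Mb, hMb⟩ := key xs0 hxs0X hxs0sol
  have hmemS : ∀ k, x k ∈ X ∩ Metric.closedBall xs0 Mb := by
    intro k
    refine ⟨hxmem k, Metric.mem_closedBall.mpr ?_⟩
    rw [dist_eq_norm]
    exact hMb k
  have hSbdd : Bornology.IsBounded (X ∩ Metric.closedBall xs0 Mb) :=
    Metric.isBounded_closedBall.subset Set.inter_subset_right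
  obtain ⟨xl, hxlcl, φ, hφ, hxφ⟩ := tendsto_subseq_of_bounded hSbdd hmemS
  have hxlX : xl ∈ X := by
    have hclosed : IsClosed (X ∩ Metric.closedBall xs0 Mb) :=
      hXcl.inter isClosed_ball_aux
    exact (hclosed.closure_subset hxlcl).1
  have hφat : Tendsto φ atTop atTop := hφ.tendsto_atTop
  have hwφ : Tendsto (fun j => ‖x (φ j) - z (φ j + 1)‖) atTop (𝓝 0) := hwten.comp hφat
  have hdiff0 : Tendsto (fun j => x (φ j) - z (φ j + 1)) atTop (𝓝 0) :=
    tendsto_zero_iff_norm_tendsto_zero.mpr hwφ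
  have hzφ : Tendsto (fun j => z (φ j + 1)) atTop (𝓝 xl) := by
    have h8 := hxφ.sub hdiff0
    rw [sub_zero] at h8
    have heq : (fun j => (x ∘ φ) j - (x (φ j) - z (φ j + 1))) = fun j => z (φ j + 1) :=
      funext fun j => by simp only [Function.comp_apply]; abel
    rwa [heq] at h8
  have hθφ : Tendsto (fun j => θ (φ j)) atTop (𝓝 θs) := hθtend.comp hφat
  -- the limit point solves the VI
  have hxlsol : ∀ w ∈ X, 0 ≤ ⟪F xl θs, w - xl⟫ := by
    intro w hw
    have hineq : ∀ k, ⟪x k - z (k + 1), w - z (k + 1)⟫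
        ≤ τ * ⟪F (x k) (θ k), w - z (k + 1)⟫ := by
      intro k
      have hp := my_proj_inner_le hXcv hPX (x k - τ • F (x k) (θ k)) hw
      rw [← hzit k] at hp
      have h1 : x k - τ • F (x k) (θ k) - z (k + 1)
          = (x k - z (k + 1)) - τ • F (x k) (θ k) := by abel
      rw [h1, inner_sub_left, real_inner_smul_left] at hp
      linarith
    have hLHS : Tendsto (fun j => ⟪x (φ j) - z (φ j + 1), w - z (φ j + 1)⟫)
        atTop (𝓝 (0:ℝ)) := by
      have := Filter.Tendsto.inner (𝕜 := ℝ) hdiff0 ((tendsto_const_nhds (x := w)).sub hzφ)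
      simpa using this
    have hRHS : Tendsto (fun j => τ * ⟪F (x (φ j)) (θ (φ j)), w - z (φ j + 1)⟫)
        atTop (𝓝 (τ * ⟪F xl θs, w - xl⟫)) := by
      have hpair : Tendsto (fun j => (x (φ j), θ (φ j))) atTop (𝓝 (xl, θs)) :=
        Filter.Tendsto.prodMk_nhds hxφ hθφ
      have hFj : Tendsto (fun j => F (x (φ j)) (θ (φ j))) atTop (𝓝 (F xl θs)) :=
        (hFcont.tendsto (xl, θs)).comp hpair
      exact (Filter.Tendsto.inner (𝕜 := ℝ) hFj ((tendsto_const_nhds (x := w)).sub hzφ)).const_mul τ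
    have hle : (0:ℝ) ≤ τ * ⟪F xl θs, w - xl⟫ :=
      le_of_tendsto_of_tendsto' hLHS hRHS (fun j => hineq (φ j))
    by_contra hcon
    push_neg at hcon
    nlinarith [mul_pos hτ0 (neg_pos.mpr hcon)]
  -- full convergence to the limit point
  obtain ⟨⟨L, hL⟩, -, -⟩ := key xl hxlX hxlsol
  have hzero : Tendsto (fun j => ‖x (φ j) - xl‖ ^ 2) atTop (𝓝 0) := by
    have h9 : Tendsto (fun j => x (φ j) - xl) atTop (𝓝 0) := by
      simpa using hxφ.sub (tendsto_const_nhds (x := xl))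
    have := (h9.norm).pow 2
    simpa using this
  have hLφ : Tendsto (fun j => ‖x (φ j) - xl‖ ^ 2) atTop (𝓝 L) :=
    hL.comp hφat
  have hL0 : L = 0 := tendsto_nhds_unique hLφ hzero
  have hxtend : Tendsto x atTop (𝓝 xl) := by
    rw [tendsto_iff_norm_sub_tendsto_zero]
    have hn2 : Tendsto (fun k => ‖x k - xl‖ ^ 2) atTop (𝓝 0) := hL0 ▸ hL
    have h4 := hn2.sqrt
    have heq2 : (fun k => Real.sqrt (‖x k - xl‖ ^ 2)) = fun k => ‖x k - xl‖ :=
      funext fun k => Real.sqrt_sq (norm_nonneg _)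
    rw [heq2] at h4
    simpa using h4
  exact ⟨⟨xl, hxlX, hxlsol, hxtend⟩, hθtend⟩
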